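/- Let V be a finite set, g ≥ 0 an integer, Δ_g = {q ∈ ℝ^V_{≥0} : Σ_v q(v) = g} the standard simplex of width g. For β ∈ Δ_g define the brick B_β := {q ∈ Δ_g : ⌊β(S)⌋ ≤ q(S) ≤ ⌈β(S)⌉ for all S ⊆ V}, where β(S) = Σ_{v∈S} β(v). Then B_β has dimension |V| − 1 (is full-dimensional in the affine span of Δ_g) if and only if β(S) ∉ ℤ for every nonempty proper subset S ⊂ V. -/

import Mathlib

open Finset

noncomputable def sumLin {V : Type*} [Fintype V] (S : Finset V) : (V → ℝ) →ₗ[ℝ] ℝ where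
  toFun q := ∑ v ∈ S, q v
  map_add' p q := by simp [Finset.sum_add_distrib]
  map_smul' c q := by simp [Finset.mul_sum]

@[simp] lemma sumLin_apply {V : Type*} [Fintype V] (S : Finset V) (q : V → ℝ) :
    sumLin S q = ∑ v ∈ S, q v := rfl

theorem brick_fulldimensional_iff
    {V : Type*} [Fintype V] [DecidableEq V]
    (hV : 2 ≤ Fintype.card V) (g : ℕ) (β : V → ℝ)
    (hβ0 : ∀ v, 0 ≤ β v) (hβsum : ∑ v, β v = g) :
    Module.finrank ℝ (vectorSpan ℝ
        {q : V → ℝ | (∀ v, 0 ≤ q v) ∧ (∑ v, q v = g) ∧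
          ∀ S : Finset V,
            ((⌊∑ v ∈ S, β v⌋ : ℝ) ≤ ∑ v ∈ S, q v ∧
              ∑ v ∈ S, q v ≤ (⌈∑ v ∈ S, β v⌉ : ℝ))}) = Fintype.card V - 1 ↔
      ∀ S : Finset V, S.Nonempty → S ≠ Finset.univ →
        ¬ ∃ n : ℤ, ∑ v ∈ S, β v = (n : ℝ) := by
  classical
  set n := Fintype.card V with hn
  set B : Set (V → ℝ) := {q : V → ℝ | (∀ v, 0 ≤ q v) ∧ (∑ v, q v = g) ∧
          ∀ S : Finset V,
            ((⌊∑ v ∈ S, β v⌋ : ℝ) ≤ ∑ v ∈ S, q v ∧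
              ∑ v ∈ S, q v ≤ (⌈∑ v ∈ S, β v⌉ : ℝ))} with hBdef
  have hfin : Module.finrank ℝ (V → ℝ) = n := Module.finrank_fintype_fun_eq_card ℝ
  constructor
  · intro hdim S hS hSu ⟨m, hm⟩
    obtain ⟨v0, hv0⟩ := hS
    obtain ⟨v1, hv1⟩ : ∃ v, v ∉ S := by
      by_contra h
      push_neg at h
      exact hSu (Finset.eq_univ_iff_forall.mpr h)
    set L : (V → ℝ) →ₗ[ℝ] ℝ × ℝ := (sumLin S).prod (sumLin (univ : Finset V)) with hL
    have hsurj : Function.Surjective L := by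
      intro ⟨a, b⟩
      refine ⟨Pi.single v0 a + Pi.single v1 (b - a), ?_⟩
      have h1 : ∀ (T : Finset V) (i : V) (x : ℝ),
          ∑ j ∈ T, Pi.single i x j = if i ∈ T then x else 0 := by
        intro T i x
        simp [Finset.sum_pi_single']
      simp only [hL, LinearMap.prod_apply, Pi.prod, sumLin_apply, Pi.add_apply,
        Finset.sum_add_distrib, h1, hv0, hv1, Finset.mem_univ, if_true, if_false]
      norm_num
      refine ⟨?_, ?_⟩ <;> rw [Finset.sum_add_distrib] <;> simp [Finset.sum_pi_single', hv0, hv1]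
    have hrn := LinearMap.finrank_range_add_finrank_ker L
    rw [LinearMap.range_eq_top.mpr hsurj, finrank_top, hfin] at hrn
    have h2 : Module.finrank ℝ (ℝ × ℝ) = 2 := by
      simp [Module.finrank_prod]
    rw [h2] at hrn
    have hle : vectorSpan ℝ B ≤ LinearMap.ker L := by
      rw [vectorSpan_def, Submodule.span_le]
      intro x hx
      rw [Set.mem_vsub] at hx
      obtain ⟨p, hp, q, hq, rfl⟩ := hx
      have hpS : ∑ v ∈ S, p v = m := by
        have := hp.2.2 S
        rw [hm] at this
        simp only [Int.floor_intCast, Int.ceil_intCast] at this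
        linarith [this.1, this.2]
      have hqS : ∑ v ∈ S, q v = m := by
        have := hq.2.2 S
        rw [hm] at this
        simp only [Int.floor_intCast, Int.ceil_intCast] at this
        linarith [this.1, this.2]
      have hpU : ∑ v, p v = g := hp.2.1
      have hqU : ∑ v, q v = g := hq.2.1
      rw [SetLike.mem_coe, LinearMap.mem_ker]
      have : p -ᵥ q = p - q := rfl
      rw [this, map_sub]
      simp only [hL, LinearMap.prod_apply, Pi.prod, sumLin_apply]
      rw [Prod.ext_iff]
      constructor <;> simp [hpS, hqS, hpU, hqU]
    have hmono : Module.finrank ℝ (vectorSpan ℝ B) ≤ Module.finrank ℝ (LinearMap.ker L) :=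
      Submodule.finrank_mono hle
    rw [hdim] at hmono
    omega
  · intro hnint
    -- vectorSpan B = ker (sumLin univ)
    have hβpos : ∀ v, 0 < β v := by
      intro v
      rcases lt_or_eq_of_le (hβ0 v) with h | h
      · exact h
      · exfalso
        refine hnint {v} (Finset.singleton_nonempty v) ?_ ⟨0, by simp [← h]⟩
        intro hvuniv
        have : Fintype.card V = 1 := by
          rw [← Finset.card_univ, ← hvuniv, Finset.card_singleton]
        omega
    -- strictness
    have hstrict : ∀ S : Finset V, S.Nonempty → S ≠ univ →
        (⌊∑ v ∈ S, β v⌋ : ℝ) < ∑ v ∈ S, β v ∧ (∑ v ∈ S, β v) < ⌈∑ v ∈ S, β v⌉ := by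
      intro S h1 h2
      constructor
      · rcases lt_or_eq_of_le (Int.floor_le (∑ v ∈ S, β v)) with h | h
        · exact h
        · exact absurd ⟨⌊∑ v ∈ S, β v⌋, h.symm⟩ (hnint S h1 h2)
      · rcases lt_or_eq_of_le (Int.le_ceil (∑ v ∈ S, β v)) with h | h
        · exact h
        · exact absurd ⟨⌈∑ v ∈ S, β v⌉, h⟩ (hnint S h1 h2)
    have hV0 : Nonempty V := Fintype.card_pos_iff.mp (by omega)
    obtain ⟨v0⟩ := hV0
    set T : Finset (Finset V) :=
      Finset.univ.filter (fun S : Finset V => S.Nonempty ∧ S ≠ univ) with hT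
    have hTne : T.Nonempty := by
      refine ⟨{v0}, ?_⟩
      rw [hT, Finset.mem_filter]
      refine ⟨Finset.mem_univ _, Finset.singleton_nonempty _, ?_⟩
      intro hvu
      have : Fintype.card V = 1 := by
        rw [← Finset.card_univ, ← hvu, Finset.card_singleton]
      omega
    set δ : ℝ := T.inf' hTne (fun S =>
      min ((∑ v ∈ S, β v) - ⌊∑ v ∈ S, β v⌋) ((⌈∑ v ∈ S, β v⌉ : ℝ) - ∑ v ∈ S, β v)) with hδ
    have hδpos : 0 < δ := by
      rw [hδ, Finset.lt_inf'_iff]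
      intro S hSmem
      rw [hT, Finset.mem_filter] at hSmem
      obtain ⟨h1, h2⟩ := hstrict S hSmem.2.1 hSmem.2.2
      simp only [lt_min_iff]
      constructor <;> linarith
    have hδle : ∀ S : Finset V, S.Nonempty → S ≠ univ →
        δ ≤ (∑ v ∈ S, β v) - ⌊∑ v ∈ S, β v⌋ ∧
        δ ≤ (⌈∑ v ∈ S, β v⌉ : ℝ) - ∑ v ∈ S, β v := by
      intro S h1 h2
      have hmem : S ∈ T := by
        rw [hT, Finset.mem_filter]; exact ⟨Finset.mem_univ _, h1, h2⟩
      have := Finset.inf'_le (b := S)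
        (f := fun S => min ((∑ v ∈ S, β v) - ⌊∑ v ∈ S, β v⌋)
          ((⌈∑ v ∈ S, β v⌉ : ℝ) - ∑ v ∈ S, β v)) hmem
      rw [← hδ] at this
      exact ⟨le_trans this (min_le_left _ _), le_trans this (min_le_right _ _)⟩
    have hβmem : β ∈ B := by
      refine ⟨hβ0, hβsum, fun S => ⟨Int.floor_le _, Int.le_ceil _⟩⟩
    have hker : Module.finrank ℝ (LinearMap.ker (sumLin (univ : Finset V))) = n - 1 := by
      have hsurj : Function.Surjective (sumLin (univ : Finset V)) := by
        intro x
        refine ⟨Pi.single v0 x, ?_⟩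
        simp [Finset.sum_pi_single']
      have hrn := LinearMap.finrank_range_add_finrank_ker (sumLin (univ : Finset V))
      rw [LinearMap.range_eq_top.mpr hsurj, finrank_top, hfin, Module.finrank_self] at hrn
      omega
    have hspan : vectorSpan ℝ B = LinearMap.ker (sumLin (univ : Finset V)) := by
      apply le_antisymm
      · rw [vectorSpan_def, Submodule.span_le]
        intro x hx
        rw [Set.mem_vsub] at hx
        obtain ⟨p, hp, q, hq, rfl⟩ := hx
        rw [SetLike.mem_coe, LinearMap.mem_ker]
        have h' : p -ᵥ q = p - q := rfl
        rw [h', map_sub]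
        simp [hp.2.1, hq.2.1]
      · intro u hu
        rw [LinearMap.mem_ker, sumLin_apply] at hu
        set M : ℝ := ∑ v, |u v| with hM
        have hM0 : 0 ≤ M := Finset.sum_nonneg (fun v _ => abs_nonneg _)
        set ε : ℝ := δ / (2 * (M + 1)) with hε
        have hεpos : 0 < ε := by positivity
        have hεM1 : ε * (M + 1) = δ / 2 := by
          rw [hε]; field_simp
        have hεM : ε * M ≤ δ / 2 := by nlinarith
        have habs : ∀ S : Finset V, |∑ v ∈ S, u v| ≤ M := by
          intro S
          calc |∑ v ∈ S, u v| ≤ ∑ v ∈ S, |u v| := Finset.abs_sum_le_sum_abs _ _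
            _ ≤ ∑ v, |u v| := Finset.sum_le_sum_of_subset_of_nonneg (Finset.subset_univ S)
                (fun v _ _ => abs_nonneg _)
        have habs' : ∀ S : Finset V, |ε * ∑ v ∈ S, u v| ≤ δ / 2 := by
          intro S
          rw [abs_mul, abs_of_pos hεpos]
          calc ε * |∑ v ∈ S, u v| ≤ ε * M := by
                exact mul_le_mul_of_nonneg_left (habs S) hεpos.le
            _ ≤ δ / 2 := hεM
        set q : V → ℝ := fun v => β v + ε * u v with hq
        have hqsum : ∀ S : Finset V, ∑ v ∈ S, q v = (∑ v ∈ S, β v) + ε * ∑ v ∈ S, u v := by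
          intro S
          simp [hq, Finset.sum_add_distrib, Finset.mul_sum]
        have hqmem : q ∈ B := by
          refine ⟨?_, ?_, ?_⟩
          · intro v
            have h1 : δ ≤ β v := by
              have h2 := hδle {v} (Finset.singleton_nonempty v) (by
                intro hvu
                have : Fintype.card V = 1 := by
                  rw [← Finset.card_univ, ← hvu, Finset.card_singleton]
                omega)
              have h3 : (0:ℝ) ≤ ⌊∑ w ∈ ({v} : Finset V), β w⌋ := by
                have : (0:ℤ) ≤ ⌊∑ w ∈ ({v} : Finset V), β w⌋ :=
                  Int.floor_nonneg.mpr (by simp [hβ0 v])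
                exact_mod_cast this
              have h4 := h2.1
              simp only [Finset.sum_singleton] at h4 h3
              linarith
            have h5 := habs' {v}
            rw [Finset.sum_singleton] at h5
            have := abs_le.mp h5
            show 0 ≤ β v + ε * u v
            linarith [this.1]
          · show ∑ v, q v = (g:ℝ)
            rw [hqsum, hu, hβsum]; ring
          · intro S
            rcases eq_or_ne S univ with rfl | hSne
            · have hq1 : ∑ v, q v = (g:ℝ) := by rw [hqsum, hu, hβsum]; ring
              rw [hq1, hβsum]
              constructor
              · rw [Int.floor_natCast]; exact le_refl _
              · rw [Int.ceil_natCast]; exact le_refl _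
            rcases Finset.eq_empty_or_nonempty S with rfl | hSne'
            · simp
            · obtain ⟨h1, h2⟩ := hδle S hSne' hSne
              have h3 := abs_le.mp (habs' S)
              rw [hqsum]
              constructor <;> linarith [h3.1, h3.2, hδpos]
        have hεu : ε • u ∈ vectorSpan ℝ B := by
          have := vsub_mem_vectorSpan ℝ hqmem hβmem
          have h' : q -ᵥ β = ε • u := by
            funext v
            show q v - β v = ε * u v
            simp [hq]
          rwa [h'] at this
        have : u = ε⁻¹ • (ε • u) := by
          rw [smul_smul, inv_mul_cancel₀ hεpos.ne', one_smul]
        rw [this]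
        exact Submodule.smul_mem _ _ hεu
    rw [hspan, hker]
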